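/- Let A₁, …, A_m be symmetric positive definite n×n real matrices, let t₁, …, t_m > 0 with Σ_{i=1}^m t_i = 1, and let h ∈ ℝⁿ. Then ⟨(Σ_{i=1}^m t_i A_i^{−1})^{−1} h, h⟩ = min{ Σ_{i=1}^m t_i ⟨A_i h_i, h_i⟩ : h₁, …, h_m ∈ ℝⁿ, Σ_{i=1}^m t_i h_i = h }, and the minimum is attained at h_i = A_i^{−1}(Σ_{j=1}^m t_j A_j^{−1})^{−1} h for i = 1, …, m. -/

import Mathlib

open Matrix

private lemma sum_mulVec' {n : ℕ} {ι : Type*} (s : Finset ι)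
    (M : ι → Matrix (Fin n) (Fin n) ℝ) (v : Fin n → ℝ) :
    (∑ i ∈ s, M i) *ᵥ v = ∑ i ∈ s, M i *ᵥ v := by
  ext j
  simp [Matrix.mulVec, dotProduct, Finset.sum_apply, Finset.sum_mul,
    Matrix.sum_apply]
  rw [Finset.sum_comm]

private lemma dotProduct_sum' {n : ℕ} {ι : Type*} (s : Finset ι)
    (v : Fin n → ℝ) (w : ι → Fin n → ℝ) :
    v ⬝ᵥ (∑ i ∈ s, w i) = ∑ i ∈ s, v ⬝ᵥ w i := by
  simp [dotProduct, Finset.mul_sum, Finset.sum_apply]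
  rw [Finset.sum_comm]

private lemma herm_symm {n : ℕ} {M : Matrix (Fin n) (Fin n) ℝ} (hM : M.IsHermitian)
    (x y : Fin n → ℝ) : M *ᵥ x ⬝ᵥ y = x ⬝ᵥ M *ᵥ y := by
  have hMt : Mᵀ = M := by
    ext i j
    rw [Matrix.transpose_apply]
    simpa using congrFun (congrFun hM.eq i) j
  rw [Matrix.dotProduct_mulVec, ← Matrix.mulVec_transpose, hMt, dotProduct_comm]

/-- **Harmonic-mean minimization of quadratic forms.** Let `A₁, …, A_m` be symmetric
positive definite `n×n` real matrices, `t₁, …, t_m > 0` with `Σ tᵢ = 1`, and `h ∈ ℝⁿ`.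
Then `⟨(Σ tᵢ Aᵢ⁻¹)⁻¹ h, h⟩ = min { Σ tᵢ ⟨Aᵢ hᵢ, hᵢ⟩ : Σ tᵢ hᵢ = h }`, and the minimum is
attained at `hᵢ = Aᵢ⁻¹ (Σ tⱼ Aⱼ⁻¹)⁻¹ h`. -/
theorem harmonic_mean_quadratic_min {n m : ℕ}
    (A : Fin m → Matrix (Fin n) (Fin n) ℝ) (hA : ∀ i, (A i).PosDef)
    (t : Fin m → ℝ) (ht : ∀ i, 0 < t i) (hts : ∑ i, t i = 1) (h : Fin n → ℝ) :
    let B : Matrix (Fin n) (Fin n) ℝ := (∑ i, t i • (A i)⁻¹)⁻¹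
    let hstar : Fin m → Fin n → ℝ := fun i => (A i)⁻¹.mulVec (B.mulVec h)
    IsLeast
      {r : ℝ | ∃ hs : Fin m → Fin n → ℝ, (∑ i, t i • hs i) = h ∧
        r = ∑ i, t i * ((A i).mulVec (hs i) ⬝ᵥ hs i)}
      (B.mulVec h ⬝ᵥ h) ∧
    (∑ i, t i • hstar i) = h ∧
    B.mulVec h ⬝ᵥ h = ∑ i, t i * ((A i).mulVec (hstar i) ⬝ᵥ hstar i) := by
  intro B hstar
  set S : Matrix (Fin n) (Fin n) ℝ := ∑ i, t i • (A i)⁻¹ with hSdef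
  have hAinv : ∀ i, ((A i)⁻¹).PosDef := fun i => (hA i).inv
  have hSpd : S.PosDef := by
    rw [Matrix.posDef_iff_dotProduct_mulVec]
    constructor
    · show Sᴴ = S
      rw [hSdef, Matrix.conjTranspose_sum]
      refine Finset.sum_congr rfl fun i _ => ?_
      rw [Matrix.conjTranspose_smul, (hAinv i).1, star_trivial]
    · intro x hx
      have hm : (Finset.univ : Finset (Fin m)).Nonempty := by
        by_contra hc
        rw [Finset.not_nonempty_iff_eq_empty] at hc
        rw [hc] at hts
        simp at hts
      have : star x ⬝ᵥ S *ᵥ x = ∑ i, t i * (star x ⬝ᵥ (A i)⁻¹ *ᵥ x) := by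
        rw [hSdef, sum_mulVec', dotProduct_sum']
        refine Finset.sum_congr rfl fun i _ => ?_
        rw [Matrix.smul_mulVec, dotProduct_smul, smul_eq_mul]
      rw [this]
      exact Finset.sum_pos (fun i _ => mul_pos (ht i) ((hAinv i).dotProduct_mulVec_pos hx)) hm
  have hdet : IsUnit S.det := (Matrix.isUnit_iff_isUnit_det S).mp hSpd.isUnit
  have hSB : S * B = 1 := Matrix.mul_nonsing_inv S hdet
  have hAhstar : ∀ i, (A i) *ᵥ hstar i = B *ᵥ h := by
    intro i
    show (A i) *ᵥ ((A i)⁻¹ *ᵥ (B *ᵥ h)) = B *ᵥ h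
    rw [Matrix.mulVec_mulVec,
      Matrix.mul_nonsing_inv _ ((Matrix.isUnit_iff_isUnit_det _).mp (hA i).isUnit),
      Matrix.one_mulVec]
  have hsum : ∑ i, t i • hstar i = h := by
    have e : ∑ i, t i • hstar i = S *ᵥ (B *ᵥ h) := by
      rw [hSdef, sum_mulVec']
      refine Finset.sum_congr rfl fun i _ => ?_
      rw [Matrix.smul_mulVec]
    rw [e, Matrix.mulVec_mulVec, hSB, Matrix.one_mulVec]
  have hval : B *ᵥ h ⬝ᵥ h = ∑ i, t i * ((A i) *ᵥ hstar i ⬝ᵥ hstar i) := by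
    have e : ∑ i, t i * ((A i) *ᵥ hstar i ⬝ᵥ hstar i) = B *ᵥ h ⬝ᵥ ∑ i, t i • hstar i := by
      rw [dotProduct_sum']
      refine Finset.sum_congr rfl fun i _ => ?_
      rw [hAhstar i, dotProduct_smul, smul_eq_mul]
    rw [e, hsum]
  refine ⟨⟨⟨hstar, hsum, hval⟩, ?_⟩, hsum, hval⟩
  rintro r ⟨hs, hsum', rfl⟩
  have key : ∀ i, 2 * (B *ᵥ h ⬝ᵥ hs i) - ((A i) *ᵥ hstar i ⬝ᵥ hstar i)
      ≤ (A i) *ᵥ hs i ⬝ᵥ hs i := by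
    intro i
    have h0 : 0 ≤ (A i) *ᵥ (hs i - hstar i) ⬝ᵥ (hs i - hstar i) := by
      have := (hA i).posSemidef.dotProduct_mulVec_nonneg (hs i - hstar i)
      rwa [star_trivial, dotProduct_comm] at this
    have hsymm : (A i) *ᵥ hstar i ⬝ᵥ hs i = (A i) *ᵥ hs i ⬝ᵥ hstar i := by
      rw [herm_symm (hA i).1, dotProduct_comm]
    rw [Matrix.mulVec_sub, sub_dotProduct, dotProduct_sub, dotProduct_sub] at h0
    rw [hAhstar i] at h0 hsymm ⊢
    linarith
  have e1 : ∑ i, t i * (B *ᵥ h ⬝ᵥ hs i) = B *ᵥ h ⬝ᵥ h := by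
    rw [← hsum', dotProduct_sum']
    refine Finset.sum_congr rfl fun i _ => ?_
    rw [dotProduct_smul, smul_eq_mul]
  calc B *ᵥ h ⬝ᵥ h
      = ∑ i, t i * (2 * (B *ᵥ h ⬝ᵥ hs i) - ((A i) *ᵥ hstar i ⬝ᵥ hstar i)) := by
        have e2 : ∀ i, t i * (2 * (B *ᵥ h ⬝ᵥ hs i) - (A i *ᵥ hstar i ⬝ᵥ hstar i))
            = 2 * (t i * (B *ᵥ h ⬝ᵥ hs i)) - t i * (A i *ᵥ hstar i ⬝ᵥ hstar i) :=
          fun i => by ring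
        rw [Finset.sum_congr rfl fun i _ => e2 i, Finset.sum_sub_distrib,
          ← Finset.mul_sum, e1, ← hval]
        ring
    _ ≤ ∑ i, t i * ((A i) *ᵥ hs i ⬝ᵥ hs i) :=
        Finset.sum_le_sum fun i _ => mul_le_mul_of_nonneg_left (key i) (ht i).le
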